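/- For an integer n ≥ 3, the cycle graph C_n satisfies 2·γ_r2(C_n) = n if and only if n ≡ 0 (mod 4); that is, C_n is 2-rainbow domination regular exactly when 4 divides n. -/

import Mathlib

open SimpleGraph Finset

/-- `f` is a `k`-rainbow dominating function on `G`: every vertex with empty color set
has, for each color, a neighbour carrying that color. -/
def IsKRDF {V : Type*} (G : SimpleGraph V) (k : ℕ) (f : V → Finset (Fin k)) : Prop :=
  ∀ v : V, f v = ∅ → ∀ i : Fin k, ∃ u : V, G.Adj v u ∧ i ∈ f u

/-- The weight of a rainbow coloring function. -/
def rdfWeight {V : Type*} [Fintype V] {k : ℕ} (f : V → Finset (Fin k)) : ℕ :=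
  ∑ v : V, (f v).card

/-- The `k`-rainbow domination number of `G`: the minimum weight of a `k`-RDF. -/
noncomputable def rainbowDomNum {V : Type*} [Fintype V] (G : SimpleGraph V) (k : ℕ) : ℕ :=
  sInf {w : ℕ | ∃ f : V → Finset (Fin k), IsKRDF G k f ∧ rdfWeight f = w}

section Aux

variable {n : ℕ} [NeZero n]

-- small decidable facts about Finset (Fin 2)
lemma aux_two_le (s t : Finset (Fin 2)) (h : ∀ i, i ∈ s ∪ t) : 2 ≤ s.card + t.card := by
  revert h; revert s t; decide

lemma aux_ne (s t : Finset (Fin 2)) (hs : s.card = 1) (ht : t.card = 1)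
    (h : ∀ i, i ∈ s ∪ t) : s ≠ t := by
  revert hs ht h; revert s t; decide

lemma aux_other (s t : Finset (Fin 2)) (hs : s.card = 1) (ht : t.card = 1) (h : t ≠ s) :
    t = Finset.univ \ s := by
  revert hs ht h; revert s t; decide

lemma aux_compl_ne_empty (s : Finset (Fin 2)) (hs : s.card = 1) : Finset.univ \ s ≠ ∅ := by
  revert hs; revert s; decide

lemma aux_ne_compl (s : Finset (Fin 2)) (hs : s.card = 1) : s ≠ Finset.univ \ s := by
  revert hs; revert s; decide

lemma fin_val_one (hn : 3 ≤ n) : ((1 : Fin n) : ℕ) = 1 := by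
  rw [Fin.val_one']; exact Nat.mod_eq_of_lt (by omega)

lemma adj_add_one (hn : 3 ≤ n) (v : Fin n) : (cycleGraph n).Adj v (v + 1) := by
  rw [cycleGraph_adj']
  right
  rw [add_sub_cancel_left, fin_val_one hn]

lemma adj_sub_one (hn : 3 ≤ n) (v : Fin n) : (cycleGraph n).Adj v (v - 1) := by
  rw [cycleGraph_adj']
  left
  rw [sub_sub_cancel, fin_val_one hn]

lemma adj_cases (hn : 3 ≤ n) {v u : Fin n} (h : (cycleGraph n).Adj v u) :
    u = v - 1 ∨ u = v + 1 := by
  rw [cycleGraph_adj'] at h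
  rcases h with h | h
  · left
    have h1 : v - u = 1 := by
      apply Fin.ext; rw [h, fin_val_one hn]
    have := sub_sub_cancel v u
    rw [h1] at this
    exact this.symm
  · right
    have h1 : u - v = 1 := by
      apply Fin.ext; rw [h, fin_val_one hn]
    have := sub_add_cancel u v
    rw [h1] at this
    rw [← this, add_comm]

/-- every empty vertex has both colors in `f (v-1) ∪ f (v+1)` -/
lemma empty_union (hn : 3 ≤ n) {f : Fin n → Finset (Fin 2)}
    (hf : IsKRDF (cycleGraph n) 2 f) {v : Fin n} (hv : f v = ∅) :
    ∀ i : Fin 2, i ∈ f (v - 1) ∪ f (v + 1) := by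
  intro i
  obtain ⟨u, hadj, hiu⟩ := hf v hv i
  rcases adj_cases hn hadj with h | h <;> subst h <;> simp [hiu]

lemma three_w (hn : 3 ≤ n) (f : Fin n → Finset (Fin 2)) :
    ∑ v : Fin n, ((f (v - 1)).card + (f v).card + (f (v + 1)).card)
      = 3 * ∑ v : Fin n, (f v).card := by
  have e1 : ∑ v : Fin n, (f (v - 1)).card = ∑ v : Fin n, (f v).card :=
    Fintype.sum_equiv (Equiv.subRight (1 : Fin n)) _ _ (fun v => rfl)
  have e2 : ∑ v : Fin n, (f (v + 1)).card = ∑ v : Fin n, (f v).card :=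
    Fintype.sum_equiv (Equiv.addRight (1 : Fin n)) _ _ (fun v => rfl)
  rw [Finset.sum_add_distrib, Finset.sum_add_distrib, e1, e2]
  ring

lemma pointwise_le (hn : 3 ≤ n) {f : Fin n → Finset (Fin 2)}
    (hf : IsKRDF (cycleGraph n) 2 f) (v : Fin n) :
    (if f v = ∅ then 2 else 1) ≤ (f (v - 1)).card + (f v).card + (f (v + 1)).card := by
  split_ifs with h
  · have := aux_two_le _ _ (empty_union hn hf h)
    omega
  · have : 1 ≤ (f v).card := Finset.card_pos.2 (Finset.nonempty_iff_ne_empty.2 h)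
    omega

/-- the basic lower bound `n ≤ 2w` -/
lemma lower_bound (hn : 3 ≤ n) {f : Fin n → Finset (Fin 2)}
    (hf : IsKRDF (cycleGraph n) 2 f) : n ≤ 2 * rdfWeight f := by
  set w := rdfWeight f with hw
  have h3w := three_w hn f
  have hle : ∑ v : Fin n, (if f v = ∅ then 2 else 1)
      ≤ ∑ v : Fin n, ((f (v - 1)).card + (f v).card + (f (v + 1)).card) :=
    Finset.sum_le_sum (fun v _ => pointwise_le hn hf v)
  -- Σ a = n + E
  have ha : ∑ v : Fin n, (if f v = ∅ then 2 else 1)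
      = n + ∑ v : Fin n, (if f v = ∅ then 1 else 0) := by
    have : ∀ v : Fin n, (if f v = ∅ then 2 else 1) = 1 + (if f v = ∅ then 1 else 0) := by
      intro v; split_ifs <;> rfl
    rw [Finset.sum_congr rfl (fun v _ => this v), Finset.sum_add_distrib]
    simp
  have hN : ∑ v : Fin n, (if f v = ∅ then 0 else 1) ≤ w := by
    rw [hw, rdfWeight]
    apply Finset.sum_le_sum
    intro v _
    split_ifs with h
    · omega
    · exact Finset.card_pos.2 (Finset.nonempty_iff_ne_empty.2 h)
  have hEN : ∑ v : Fin n, (if f v = ∅ then 1 else 0)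
      + ∑ v : Fin n, (if f v = ∅ then 0 else 1) = n := by
    rw [← Finset.sum_add_distrib]
    have : ∀ v : Fin n, ((if f v = ∅ then 1 else 0) + (if f v = ∅ then 0 else 1)) = 1 := by
      intro v; split_ifs <;> rfl
    rw [Finset.sum_congr rfl (fun v _ => this v)]
    simp
  rw [ha, h3w] at hle
  change n + _ ≤ 3 * w at hle
  omega

end Aux

section Aux2
variable {n : ℕ} [NeZero n]
open Fin.NatCast

lemma aux_compl_card (s : Finset (Fin 2)) (hs : s.card = 1) : (Finset.univ \ s).card = 1 := by
  revert hs; revert s; decide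

lemma aux_sdiff_sdiff (s : Finset (Fin 2)) :
    Finset.univ \ (Finset.univ \ s) = s := by
  revert s; decide

lemma rigidity (hn : 3 ≤ n) {f : Fin n → Finset (Fin 2)}
    (hf : IsKRDF (cycleGraph n) 2 f) (hw : 2 * rdfWeight f = n) : n % 4 = 0 := by
  set w := rdfWeight f with hwdef
  have hww : w = ∑ v : Fin n, (f v).card := rfl
  -- arithmetic facts as in lower_bound
  have h3w := three_w hn f
  have ha : ∑ v : Fin n, (if f v = ∅ then 2 else 1)
      = n + ∑ v : Fin n, (if f v = ∅ then 1 else 0) := by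
    have hpt : ∀ v : Fin n, (if f v = ∅ then 2 else 1) = 1 + (if f v = ∅ then 1 else 0) := by
      intro v; split_ifs <;> rfl
    rw [Finset.sum_congr rfl (fun v _ => hpt v), Finset.sum_add_distrib]
    simp
  have hN : ∑ v : Fin n, (if f v = ∅ then 0 else 1) ≤ w := by
    rw [hwdef, rdfWeight]
    apply Finset.sum_le_sum
    intro v _
    split_ifs with h
    · omega
    · exact Finset.card_pos.2 (Finset.nonempty_iff_ne_empty.2 h)
  have hEN : ∑ v : Fin n, (if f v = ∅ then 1 else 0)
      + ∑ v : Fin n, (if f v = ∅ then 0 else 1) = n := by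
    rw [← Finset.sum_add_distrib]
    have hpt : ∀ v : Fin n, ((if f v = ∅ then 1 else 0) + (if f v = ∅ then 0 else 1)) = 1 := by
      intro v; split_ifs <;> rfl
    rw [Finset.sum_congr rfl (fun v _ => hpt v)]
    simp
  have hle : ∑ v : Fin n, (if f v = ∅ then 2 else 1)
      ≤ ∑ v : Fin n, ((f (v - 1)).card + (f v).card + (f (v + 1)).card) :=
    Finset.sum_le_sum (fun v _ => pointwise_le hn hf v)
  have hsum_eq : ∑ v : Fin n, (if f v = ∅ then 2 else 1)
      = ∑ v : Fin n, ((f (v - 1)).card + (f v).card + (f (v + 1)).card) := by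
    apply le_antisymm hle
    rw [h3w, ha]
    omega
  have heq : ∀ v : Fin n, (if f v = ∅ then 2 else 1)
      = (f (v - 1)).card + (f v).card + (f (v + 1)).card :=
    fun v => (Finset.sum_eq_sum_iff_of_le (fun v _ => pointwise_le hn hf v)).1 hsum_eq v
      (Finset.mem_univ v)
  -- structural facts
  have h1 : ∀ v : Fin n, f v ≠ ∅ → f (v - 1) = ∅ ∧ (f v).card = 1 ∧ f (v + 1) = ∅ := by
    intro v hv
    have := heq v
    rw [if_neg hv] at this
    have hc : 1 ≤ (f v).card := Finset.card_pos.2 (Finset.nonempty_iff_ne_empty.2 hv)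
    refine ⟨Finset.card_eq_zero.1 (by omega), by omega, Finset.card_eq_zero.1 (by omega)⟩
  have h3 : ∀ v : Fin n, f v = ∅ →
      f (v - 1) ≠ ∅ ∧ f (v + 1) ≠ ∅ ∧ f (v - 1) ≠ f (v + 1) := by
    intro v hv
    have h2 := heq v
    rw [if_pos hv] at h2
    have hcv : (f v).card = 0 := by rw [hv]; simp
    have hm : f (v - 1) ≠ ∅ := by
      intro he
      have hc1 : (f (v - 1)).card = 0 := by rw [he]; simp
      have hne : f (v + 1) ≠ ∅ := by
        intro he2
        have : (f (v + 1)).card = 0 := by rw [he2]; simp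
        omega
      have := (h1 (v + 1) hne).2.1
      omega
    have hp : f (v + 1) ≠ ∅ := by
      intro he
      have hc1 : (f (v + 1)).card = 0 := by rw [he]; simp
      have hne : f (v - 1) ≠ ∅ := by
        intro he2
        have : (f (v - 1)).card = 0 := by rw [he2]; simp
        omega
      have := (h1 (v - 1) hne).2.1
      omega
    exact ⟨hm, hp, aux_ne _ _ (h1 _ hm).2.1 (h1 _ hp).2.1 (empty_union hn hf hv)⟩
  have h4 : ∀ v : Fin n, f v ≠ ∅ →
      f (v + 1 + 1) ≠ ∅ ∧ f (v + 1 + 1) ≠ f v ∧ (f (v + 1 + 1)).card = 1 := by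
    intro v hv
    have he1 : f (v + 1) = ∅ := (h1 v hv).2.2
    have h3' := h3 (v + 1) he1
    rw [add_sub_cancel_right] at h3'
    exact ⟨h3'.2.1, fun h => h3'.2.2 (h ▸ rfl), (h1 _ h3'.2.1).2.1⟩
  -- pick a nonempty vertex
  obtain ⟨v0, hv0⟩ : ∃ v0 : Fin n, f v0 ≠ ∅ := by
    by_cases h : f 0 = ∅
    · exact ⟨0 + 1, (h3 0 h).2.1⟩
    · exact ⟨0, h⟩
  have hcard0 : (f v0).card = 1 := (h1 v0 hv0).2.1
  -- induction along the cycle in steps of 2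
  have claim : ∀ m : ℕ, f (v0 + ((2 * m : ℕ) : Fin n))
      = if Even m then f v0 else Finset.univ \ f v0 := by
    intro m
    induction m with
    | zero => simp
    | succ m ih =>
      have key2 : v0 + ((2 * (m + 1) : ℕ) : Fin n)
          = (v0 + ((2 * m : ℕ) : Fin n)) + 1 + 1 := by
        rw [show 2 * (m + 1) = 2 * m + 1 + 1 by ring, Nat.cast_succ, Nat.cast_succ]
        simp only [add_assoc]
      set x := v0 + ((2 * m : ℕ) : Fin n) with hxdef
      have hx : f x ≠ ∅ := by
        rw [ih]
        split_ifs
        · exact hv0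
        · exact aux_compl_ne_empty _ hcard0
      obtain ⟨hne, hdist, hcard⟩ := h4 x hx
      rw [key2]
      by_cases he : Even m
      · rw [if_neg (by simp [Nat.even_add_one, he])]
        have hfx : f x = f v0 := by rw [ih, if_pos he]
        have : f (x + 1 + 1) = Finset.univ \ f x :=
          aux_other _ _ (hfx ▸ hcard0) hcard hdist
        rw [this, hfx]
      · rw [if_pos (Nat.even_add_one.mpr he)]
        have hfx : f x = Finset.univ \ f v0 := by rw [ih, if_neg he]
        have hcx : (f x).card = 1 := by rw [hfx]; exact aux_compl_card _ hcard0
        have : f (x + 1 + 1) = Finset.univ \ f x := aux_other _ _ hcx hcard hdist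
        rw [this, hfx, aux_sdiff_sdiff]
  -- conclude
  have hfinal := claim w
  have hcast : ((2 * w : ℕ) : Fin n) = 0 := by
    rw [hw, Fin.natCast_self]
  rw [hcast, add_zero] at hfinal
  have heven : Even w := by
    by_contra hodd
    rw [if_neg hodd] at hfinal
    exact aux_ne_compl _ hcard0 hfinal
  obtain ⟨k, hk⟩ := heven
  omega

end Aux2

section Upper
variable {n : ℕ} [NeZero n]

lemma count_lemma : ∀ k : ℕ, (∑ i ∈ Finset.range (4 * k),
    (if i % 4 = 0 then 1 else if i % 4 = 2 then 1 else 0)) = 2 * k := by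
  intro k
  induction k with
  | zero => simp
  | succ k ih =>
    have h4 : 4 * (k + 1) = (4 * k) + 1 + 1 + 1 + 1 := by ring
    rw [h4, Finset.sum_range_succ, Finset.sum_range_succ, Finset.sum_range_succ,
      Finset.sum_range_succ, ih]
    have c0 : (4 * k) % 4 = 0 := by omega
    have c1 : (4 * k + 1) % 4 = 1 := by omega
    have c2 : (4 * k + 1 + 1) % 4 = 2 := by omega
    have c3 : (4 * k + 1 + 1 + 1) % 4 = 3 := by omega
    rw [if_pos c0, if_neg (by omega), if_neg (by omega), if_neg (by omega),
      if_pos (by omega), if_neg (by omega), if_neg (by omega)]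
    omega

lemma sub_one_val (hn : 3 ≤ n) (v : Fin n) (hv : 1 ≤ v.val) : (v - 1).val = v.val - 1 := by
  rw [Fin.sub_def]
  simp only [fin_val_one hn]
  show (n - 1 + v.val) % n = v.val - 1
  have h' : n - 1 + v.val = (v.val - 1) + n := by omega
  rw [h', Nat.add_mod_right, Nat.mod_eq_of_lt (by omega)]

lemma add_one_val (hn : 3 ≤ n) (v : Fin n) : (v + 1).val = (v.val + 1) % n := by
  rw [Fin.add_def]
  simp only [fin_val_one hn]

lemma upper (hn : 3 ≤ n) (hmod : n % 4 = 0) :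
    ∃ f : Fin n → Finset (Fin 2), IsKRDF (cycleGraph n) 2 f ∧ 2 * rdfWeight f = n := by
  refine ⟨fun v => if v.val % 4 = 0 then {0} else if v.val % 4 = 2 then {1} else ∅, ?_, ?_⟩
  · intro v hv i
    have hvlt : v.val < n := v.isLt
    simp only at hv
    split_ifs at hv with h0 h2
    · exact absurd hv (by decide)
    · exact absurd hv (by decide)
    -- now v.val % 4 = 1 or 3
    have hsub : (v - 1).val = v.val - 1 := sub_one_val hn v (by omega)
    have hadd : (v + 1).val = (v.val + 1) % n := add_one_val hn v
    fin_cases i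
    · -- color 0, need neighbour with val % 4 = 0
      by_cases h1 : v.val % 4 = 1
      · refine ⟨v - 1, adj_sub_one hn v, ?_⟩
        have : (v - 1).val % 4 = 0 := by rw [hsub]; omega
        beta_reduce
        rw [if_pos this]
        decide
      · -- v.val % 4 = 3
        refine ⟨v + 1, adj_add_one hn v, ?_⟩
        have : (v + 1).val % 4 = 0 := by
          rw [hadd]
          rcases Nat.lt_or_ge (v.val + 1) n with hlt | hge
          · rw [Nat.mod_eq_of_lt hlt]; omega
          · have : v.val + 1 = n := by omega
            rw [this, Nat.mod_self]
        beta_reduce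
        rw [if_pos this]
        decide
    · -- color 1, need neighbour with val % 4 = 2
      by_cases h1 : v.val % 4 = 1
      · refine ⟨v + 1, adj_add_one hn v, ?_⟩
        have hne : v.val + 1 < n := by
          rcases Nat.lt_or_ge (v.val + 1) n with hlt | hge
          · exact hlt
          · omega
        have : (v + 1).val % 4 = 2 := by rw [hadd, Nat.mod_eq_of_lt hne]; omega
        beta_reduce
        rw [if_neg (by omega), if_pos this]
        decide
      · refine ⟨v - 1, adj_sub_one hn v, ?_⟩
        have : (v - 1).val % 4 = 2 := by rw [hsub]; omega
        beta_reduce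
        rw [if_neg (by omega), if_pos this]
        decide
  · obtain ⟨k, hk⟩ : ∃ k, n = 4 * k := ⟨n / 4, by omega⟩
    have hcard : ∀ v : Fin n,
        ((if v.val % 4 = 0 then ({0} : Finset (Fin 2)) else if v.val % 4 = 2 then {1} else ∅).card)
        = (if v.val % 4 = 0 then 1 else if v.val % 4 = 2 then 1 else 0) := by
      intro v; split_ifs <;> simp
    rw [rdfWeight]
    rw [Finset.sum_congr rfl (fun v _ => hcard v)]
    rw [Fin.sum_univ_eq_sum_range (fun i => if i % 4 = 0 then 1 else if i % 4 = 2 then 1 else 0) n]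
    rw [hk, count_lemma]
    omega

end Upper

theorem stmt_14_aux (n : ℕ) (hn : 3 ≤ n) :
    2 * rainbowDomNum (SimpleGraph.cycleGraph n) 2 = n ↔ n % 4 = 0 := by
  haveI : NeZero n := ⟨by omega⟩
  have hSne : {w : ℕ | ∃ f : Fin n → Finset (Fin 2),
      IsKRDF (cycleGraph n) 2 f ∧ rdfWeight f = w}.Nonempty := by
    refine ⟨rdfWeight (fun _ : Fin n => (Finset.univ : Finset (Fin 2))),
      fun _ => Finset.univ, ?_, rfl⟩
    intro v hv i
    exact ⟨v + 1, adj_add_one hn v, by simp⟩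
  have hmem := Nat.sInf_mem hSne
  obtain ⟨f0, hf0, hwf0⟩ := hmem
  have hlow : n ≤ 2 * rainbowDomNum (cycleGraph n) 2 := by
    rw [rainbowDomNum, ← hwf0]
    exact lower_bound hn hf0
  constructor
  · intro h
    apply rigidity hn hf0
    rw [hwf0]
    exact h
  · intro hmod
    obtain ⟨f, hf, hwf⟩ := upper hn hmod
    have hub : rainbowDomNum (cycleGraph n) 2 ≤ rdfWeight f :=
      Nat.sInf_le ⟨f, hf, rfl⟩
    omega

/-- For `n ≥ 3`, the cycle `C_n` satisfies `2·γ_r2(C_n) = n` (i.e. `C_n` is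
`2`-rainbow domination regular) if and only if `n ≡ 0 (mod 4)`. -/
theorem stmt_14 (n : ℕ) (hn : 3 ≤ n) :
    2 * rainbowDomNum (SimpleGraph.cycleGraph n) 2 = n ↔ n % 4 = 0 := stmt_14_aux n hn
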